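/- Let V be a right Banach ℍ-module with dim_ℍ V ≥ 2 whose continuous dual separates points (i.e., for every nonzero x ∈ V there exists a bounded right ℍ-linear functional f : V → ℍ with f(x) ≠ 0), and let T ∈ B(V). Then σ_S(T + A) ⊆ σ_S(A) for every A ∈ B(V) if and only if T = 0. -/

import Mathlib

/-!
Quaternionic setting: `ℍ` is the real quaternions.  A right Banach `ℍ`-module is
formalized as a real Banach space `V` together with a compatible `Module ℍᵐᵒᵖ V`
structure (right `ℍ`-action) satisfying `‖x • q‖ = ‖x‖ * |q|`; bounded right
`ℍ`-linear operators are the continuous `ℍᵐᵒᵖ`-linear maps `V →L[ℍᵐᵒᵖ] V`.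
-/

open MulOpposite

notation "ℍ" => Quaternion ℝ

section Defs

variable {W : Type*} [NormedAddCommGroup W] [Module ℍᵐᵒᵖ W] [Module ℝ W]
  [SMulCommClass ℍᵐᵒᵖ ℝ W] [ContinuousConstSMul ℝ W]

/-- `Q_q(T) = T² − 2 Re(q) T + |q|² I`. -/
noncomputable def Qs (T : W →L[ℍᵐᵒᵖ] W) (q : ℍ) : W →L[ℍᵐᵒᵖ] W :=
  T * T - (2 * q.re) • T + (‖q‖ ^ 2) • (1 : W →L[ℍᵐᵒᵖ] W)

/-- The S-resolvent set: `q` such that `Q_q(T)` is bijective with bounded inverse,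
i.e. invertible in the ring `B(W)`. -/
noncomputable def sResolvent (T : W →L[ℍᵐᵒᵖ] W) : Set ℍ :=
  {q | IsUnit (Qs T q)}

/-- The S-spectrum `σ_S(T) = ℍ \ ρ_S(T)`. -/
noncomputable def sSpectrum (T : W →L[ℍᵐᵒᵖ] W) : Set ℍ :=
  {q | ¬ IsUnit (Qs T q)}

/-- A compact operator: the image of the closed unit ball is relatively compact. -/
def IsCompactOp (K : W →L[ℍᵐᵒᵖ] W) : Prop :=
  IsCompact (closure (⇑K '' Metric.closedBall (0 : W) 1))

/-- `S` is a quasi-inverse of `T` if `S T = I - K₁` and `T S = I - K₂` with `K₁, K₂` compact. -/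
def IsQuasiInverse (S T : W →L[ℍᵐᵒᵖ] W) : Prop :=
  ∃ K₁ K₂ : W →L[ℍᵐᵒᵖ] W, IsCompactOp K₁ ∧ IsCompactOp K₂ ∧
    S * T = 1 - K₁ ∧ T * S = 1 - K₂

/-- The essential S-spectrum: `q` such that `Q_q(T)` admits no quasi-inverse. -/
noncomputable def essSpectrum (T : W →L[ℍᵐᵒᵖ] W) : Set ℍ :=
  {q | ¬ ∃ S : W →L[ℍᵐᵒᵖ] W, IsQuasiInverse S (Qs T q)}

/-- The Weyl S-spectrum: `⋂ σ_S(T + K)` over all compact `K`. -/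
noncomputable def weylSpectrum (T : W →L[ℍᵐᵒᵖ] W) : Set ℍ :=
  ⋂ K ∈ {K : W →L[ℍᵐᵒᵖ] W | IsCompactOp K}, sSpectrum (T + K)

/-- The 2-sphere `[q] = {h q h⁻¹ : h ∈ ℍ \ {0}}`. -/
def qSphere (q : ℍ) : Set ℍ := {p | ∃ h : ℍ, h ≠ 0 ∧ p = h * q * h⁻¹}

/-- Minimum modulus `μ(T) = inf {‖T x‖ : ‖x‖ = 1}`. -/
noncomputable def muMin (T : W →L[ℍᵐᵒᵖ] W) : ℝ :=
  sInf {c : ℝ | ∃ x : W, ‖x‖ = 1 ∧ c = ‖T x‖}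

/-- Operator norm of a bounded right `ℍ`-linear operator. -/
noncomputable def opNorm (T : W →L[ℍᵐᵒᵖ] W) : ℝ :=
  sInf {c : ℝ | 0 ≤ c ∧ ∀ x : W, ‖T x‖ ≤ c * ‖x‖}

/-- Restriction of `T` to an invariant submodule. -/
noncomputable def restrictOp (T : W →L[ℍᵐᵒᵖ] W) (M : Submodule ℍᵐᵒᵖ W)
    (h : ∀ x ∈ M, T x ∈ M) : ↥M →L[ℍᵐᵒᵖ] ↥M where
  toLinearMap := (T : W →ₗ[ℍᵐᵒᵖ] W).restrict h
  cont := Continuous.subtype_mk (T.continuous.comp continuous_subtype_val) _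

end Defs

section Sub

variable {V : Type*} [NormedAddCommGroup V] [NormedSpace ℝ V]
  [Module ℍᵐᵒᵖ V] [IsScalarTower ℝ ℍᵐᵒᵖ V] [SMulCommClass ℍᵐᵒᵖ ℝ V]

instance (M : Submodule ℍᵐᵒᵖ V) : SMulCommClass ℍᵐᵒᵖ ℝ ↥M := by
  constructor
  intro q r x
  apply Subtype.ext
  simp only [Submodule.coe_smul_of_tower, SetLike.val_smul]
  exact smul_comm q r (x : V)

instance (M : Submodule ℍᵐᵒᵖ V) : ContinuousConstSMul ℝ ↥M := by
  constructor
  intro r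
  have h : Continuous fun x : ↥M => r • (x : V) :=
    (continuous_const_smul r).comp continuous_subtype_val
  exact Continuous.subtype_mk h _

/-- `q` is a right eigenvalue of finite type of `T`: `V` is the direct sum of two closed
`T`-invariant right `ℍ`-submodules `M₁`, `M₂` with `M₁` finite-dimensional over `ℍ`,
`σ_S(T|M₁) ∩ σ_S(T|M₂) = ∅` and `σ_S(T|M₁) = [q]`. -/
noncomputable def IsFiniteTypeEigenvalue (T : V →L[ℍᵐᵒᵖ] V) (q : ℍ) : Prop :=
  ∃ (M₁ M₂ : Submodule ℍᵐᵒᵖ V) (h₁ : ∀ x ∈ M₁, T x ∈ M₁) (h₂ : ∀ x ∈ M₂, T x ∈ M₂),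
    IsClosed (M₁ : Set V) ∧ IsClosed (M₂ : Set V) ∧ IsCompl M₁ M₂ ∧
    FiniteDimensional ℍᵐᵒᵖ ↥M₁ ∧
    sSpectrum (restrictOp T M₁ h₁) ∩ sSpectrum (restrictOp T M₂ h₂) = ∅ ∧
    sSpectrum (restrictOp T M₁ h₁) = qSphere q

end Sub

section AuxProof

variable {V : Type*} [NormedAddCommGroup V] [NormedSpace ℝ V]
  [Module ℍᵐᵒᵖ V] [IsScalarTower ℝ ℍᵐᵒᵖ V] [SMulCommClass ℍᵐᵒᵖ ℝ V]

/-- The `ℝ`-linear map `p ↦ op p • y`, for continuity purposes. -/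
noncomputable def auxSmulAt (y : V) : ℍ →ₗ[ℝ] V where
  toFun p := op p • y
  map_add' a b := by rw [op_add, add_smul]
  map_smul' r a := by
    simp only [RingHom.id_apply]
    rw [MulOpposite.op_smul, smul_assoc]

/-- Rank-one operator `z ↦ op (f z) • y` (i.e. `z ↦ y · f(z)`). -/
noncomputable def rankOne (f : V →L[ℍᵐᵒᵖ] ℍ) (y : V) : V →L[ℍᵐᵒᵖ] V where
  toFun z := op (f z) • y
  map_add' a b := by rw [map_add, op_add, add_smul]
  map_smul' q z := by
    simp only [RingHom.id_apply, map_smul]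
    rw [← MulOpposite.op_unop q, op_smul_eq_mul, op_mul, mul_smul]
  cont := ((auxSmulAt y).continuous_of_finiteDimensional).comp f.continuous

@[simp] lemma rankOne_apply (f : V →L[ℍᵐᵒᵖ] ℍ) (y z : V) :
    rankOne f y z = op (f z) • y := rfl

/-- Left scalar multiple of a right-linear functional. -/
noncomputable def lmulF (p : ℍ) (f : V →L[ℍᵐᵒᵖ] ℍ) : V →L[ℍᵐᵒᵖ] ℍ where
  toFun z := p * f z
  map_add' a b := by rw [map_add, mul_add]
  map_smul' q z := by
    simp only [RingHom.id_apply, map_smul]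
    rw [← MulOpposite.op_unop q, op_smul_eq_mul, op_smul_eq_mul, mul_assoc]
  cont := continuous_const.mul f.continuous

@[simp] lemma lmulF_apply (p : ℍ) (f : V →L[ℍᵐᵒᵖ] ℍ) (z : V) : lmulF p f z = p * f z := rfl

lemma isUnit_of_isUnit_sq {R : Type*} [Ring R] {a : R} (h : IsUnit (a * a)) : IsUnit a := by
  obtain ⟨u, hu⟩ := h
  have hc : Commute (↑u) a := by
    rw [hu]; exact mul_assoc a a a
  have hc' : Commute (↑u⁻¹) a := hc.units_inv_left
  refine isUnit_iff_exists.2 ⟨a * ↑u⁻¹, ?_, ?_⟩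
  · rw [← mul_assoc, ← hu]; exact u.mul_inv
  · calc (a * ↑u⁻¹) * a = a * (↑u⁻¹ * a) := by rw [mul_assoc]
      _ = a * (a * ↑u⁻¹) := by rw [hc'.eq]
      _ = (a * a) * ↑u⁻¹ := by rw [mul_assoc]
      _ = (u : R) * ↑u⁻¹ := by rw [hu]
      _ = 1 := u.mul_inv

lemma unit_injective {A : V →L[ℍᵐᵒᵖ] V} (h : IsUnit A) {v : V} (hv : A v = 0) : v = 0 := by
  obtain ⟨u, hu⟩ := h
  have h1 : ((↑u⁻¹ * ↑u : V →L[ℍᵐᵒᵖ] V)) v = v := by rw [u.inv_mul]; rfl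
  rw [ContinuousLinearMap.mul_apply, hu, hv, map_zero] at h1
  exact h1.symm

lemma isUnit_one_sub_rankOne (f : V →L[ℍᵐᵒᵖ] ℍ) (y : V) (h : (1 : ℍ) - f y ≠ 0) :
    IsUnit ((1 : V →L[ℍᵐᵒᵖ] V) - rankOne f y) := by
  set c := f y with hcdef
  set d := (1 - c)⁻¹ with hddef
  have hd1 : (1 - c) * d = 1 := mul_inv_cancel₀ h
  have hd2 : d * (1 - c) = 1 := inv_mul_cancel₀ h
  set S := rankOne (lmulF d f) y with hSdef
  have hfy : ∀ p : ℍ, f (op p • y) = c * p := fun p => by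
    rw [map_smul, op_smul_eq_mul, hcdef]
  refine isUnit_iff_exists.2 ⟨1 + S, ?_, ?_⟩
  · ext z
    simp only [ContinuousLinearMap.mul_apply, ContinuousLinearMap.add_apply,
      ContinuousLinearMap.sub_apply, ContinuousLinearMap.one_apply, map_add, map_sub,
      hSdef, rankOne_apply, lmulF_apply, hfy]
    have hcoef : d * f z - c * (d * f z) = f z := by
      rw [← one_sub_mul, ← mul_assoc, hd1, one_mul]
    rw [← sub_smul, ← op_sub, hcoef]
    abel
  · ext z
    simp only [ContinuousLinearMap.mul_apply, ContinuousLinearMap.add_apply,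
      ContinuousLinearMap.sub_apply, ContinuousLinearMap.one_apply, map_add, map_sub,
      hSdef, rankOne_apply, lmulF_apply, hfy]
    have hcoef : d * f z - d * (c * f z) = f z := by
      rw [← mul_sub, ← one_sub_mul, ← mul_assoc, hd2, one_mul]
    rw [sub_eq_iff_eq_add] at hcoef
    rw [show op (f z) • y + op (d * (c * f z)) • y = op (d * f z) • y by
      rw [← add_smul, ← op_add, ← hcoef]]
    abel

lemma exists_dual (hsep : ∀ x : V, x ≠ 0 → ∃ f : V →L[ℍᵐᵒᵖ] ℍ, f x ≠ 0)
    {v w : V} (hv : v ≠ 0) (hw : ¬ ∃ q : ℍ, w = op q • v) :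
    ∃ f : V →L[ℍᵐᵒᵖ] ℍ, f v = 1 ∧ f w = -1 := by
  obtain ⟨g, hgv⟩ : ∃ g : V →L[ℍᵐᵒᵖ] ℍ, g v = 1 := by
    obtain ⟨g₀, hg₀⟩ := hsep v hv
    exact ⟨lmulF (g₀ v)⁻¹ g₀, inv_mul_cancel₀ hg₀⟩
  set w₀ := w - op (g w) • v with hw₀def
  have hw₀ : w₀ ≠ 0 := by
    intro h0
    rw [hw₀def, sub_eq_zero] at h0
    exact hw ⟨g w, h0⟩
  have hgw₀ : g w₀ = 0 := by
    rw [hw₀def, map_sub, map_smul, op_smul_eq_mul, hgv, one_mul, sub_self]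
  have hweq : w = w₀ + op (g w) • v := by rw [hw₀def]; abel
  obtain ⟨hh, hhv, hhw, hhw0⟩ :
      ∃ hh : V →L[ℍᵐᵒᵖ] ℍ, hh v = 0 ∧ hh w = hh w₀ ∧ hh w₀ ≠ 0 := by
    obtain ⟨h₀, hh₀⟩ := hsep w₀ hw₀
    refine ⟨h₀ - lmulF (h₀ v) g, ?_, ?_, ?_⟩
    · rw [ContinuousLinearMap.sub_apply, lmulF_apply, hgv, mul_one, sub_self]
    · conv_lhs => rw [hweq]
      simp only [ContinuousLinearMap.sub_apply, lmulF_apply, map_add, map_smul,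
        op_smul_eq_mul, hgv, hgw₀, one_mul, mul_zero, sub_zero, zero_add, mul_add]
      simp
    · rw [ContinuousLinearMap.sub_apply, lmulF_apply, hgw₀, mul_zero, sub_zero]
      exact hh₀
  refine ⟨g + lmulF ((-1 - g w) * (hh w₀)⁻¹) hh, ?_, ?_⟩
  · rw [ContinuousLinearMap.add_apply, lmulF_apply, hgv, hhv, mul_zero, add_zero]
  · rw [ContinuousLinearMap.add_apply, lmulF_apply, hhw, mul_assoc,
      inv_mul_cancel₀ hhw0, mul_one]
    abel

end AuxProof

theorem stmt0 {V : Type*} [NormedAddCommGroup V] [NormedSpace ℝ V] [CompleteSpace V]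
    [Module ℍᵐᵒᵖ V] [IsScalarTower ℝ ℍᵐᵒᵖ V] [SMulCommClass ℍᵐᵒᵖ ℝ V]
    (hnorm : ∀ (x : V) (q : ℍ), ‖op q • x‖ = ‖x‖ * ‖q‖)
    (hdim : 2 ≤ Module.rank ℍᵐᵒᵖ V)
    (hsep : ∀ x : V, x ≠ 0 → ∃ f : V →L[ℍᵐᵒᵖ] ℍ, f x ≠ 0)
    (T : V →L[ℍᵐᵒᵖ] V) :
    (∀ A : V →L[ℍᵐᵒᵖ] V, sSpectrum (T + A) ⊆ sSpectrum A) ↔ T = 0 := by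
  constructor
  · intro H
    have hq0 : ∀ B : V →L[ℍᵐᵒᵖ] V, Qs B 0 = B * B := by
      intro B; simp [Qs]; left; rfl
    have key : ∀ A : V →L[ℍᵐᵒᵖ] V, IsUnit A → IsUnit (T + A) := by
      intro A hA
      by_contra hTA
      have h0 : (0 : ℍ) ∈ sSpectrum (T + A) := by
        simp only [sSpectrum, Set.mem_setOf_eq, hq0]
        exact fun h => hTA (isUnit_of_isUnit_sq h)
      have h0' := H A h0
      simp only [sSpectrum, Set.mem_setOf_eq, hq0] at h0'
      exact h0' (hA.mul hA)
    ext v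
    rw [ContinuousLinearMap.zero_apply]
    by_contra hTv
    have hv : v ≠ 0 := fun h => hTv (by rw [h, map_zero])
    obtain ⟨f, hf1, hf2⟩ : ∃ f : V →L[ℍᵐᵒᵖ] ℍ, f v = 1 ∧ f (T v) ≠ 0 := by
      by_cases hcase : ∃ q : ℍ, T v = op q • v
      · obtain ⟨q, hq⟩ := hcase
        have hqne : q ≠ 0 := by
          rintro rfl
          rw [op_zero, zero_smul] at hq
          exact hTv hq
        obtain ⟨g, hg⟩ := hsep v hv
        refine ⟨lmulF (g v)⁻¹ g, inv_mul_cancel₀ hg, ?_⟩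
        rw [lmulF_apply, hq, map_smul, op_smul_eq_mul, ← mul_assoc,
          inv_mul_cancel₀ hg, one_mul]
        exact hqne
      · obtain ⟨f, h1, h2⟩ := exists_dual hsep hv hcase
        exact ⟨f, h1, by rw [h2]; exact neg_ne_zero.2 one_ne_zero⟩
    set y := v + T v with hydef
    have hA : IsUnit (1 - rankOne f y) := by
      apply isUnit_one_sub_rankOne
      rw [hydef, map_add, hf1]
      intro hcontra
      apply hf2
      have h' : (1 : ℍ) - (1 + f (T v)) = -f (T v) := by abel
      rw [h', neg_eq_zero] at hcontra
      exact hcontra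
    have hu := key _ hA
    have happ : (T + (1 - rankOne f y)) v = 0 := by
      simp only [ContinuousLinearMap.add_apply, ContinuousLinearMap.sub_apply,
        ContinuousLinearMap.one_apply, rankOne_apply, hf1, op_one, one_smul, hydef]
      abel
    exact hv (unit_injective hu happ)
  · rintro rfl A
    rw [zero_add]
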